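/- Let u, S, α : ℕ → ℝ be sequences with u t ≥ 0 and α t ≥ 0 for all t, S nondecreasing, and S 0 ≥ (u 0)^2. If (u t)^2 ≤ S t + ∑_{τ=1}^{t-1} α τ * u τ holds for every t, then u t ≤ Real.sqrt (S t) + ∑_{τ=1}^{t-1} α τ for every t. -/
import Mathlib


theorem stmt_1 (u S α : ℕ → ℝ)
    (hu : ∀ t, 0 ≤ u t) (hα : ∀ t, 0 ≤ α t)
    (hS : Monotone S) (hS0 : (u 0) ^ 2 ≤ S 0)
    (hrec : ∀ t, (u t) ^ 2 ≤ S t + ∑ τ ∈ Finset.Icc 1 (t - 1), α τ * u τ) :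
    ∀ t, u t ≤ Real.sqrt (S t) + ∑ τ ∈ Finset.Icc 1 (t - 1), α τ := by
  have hS0' : ∀ t, 0 ≤ S t := fun t =>
    le_trans (le_trans (sq_nonneg _) hS0) (hS (Nat.zero_le t))
  intro t
  induction t using Nat.strong_induction_on with
  | _ t ih =>
    have key : ∀ τ ∈ Finset.Icc 1 (t - 1),
        u τ ≤ Real.sqrt (S t) + ∑ σ ∈ Finset.Icc 1 (t - 1), α σ := by
      intro τ hτ
      simp only [Finset.mem_Icc] at hτ
      have hτt : τ < t := by omega
      calc u τ ≤ Real.sqrt (S τ) + ∑ σ ∈ Finset.Icc 1 (τ - 1), α σ := ih τ hτt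
        _ ≤ Real.sqrt (S t) + ∑ σ ∈ Finset.Icc 1 (t - 1), α σ := by
            exact add_le_add (Real.sqrt_le_sqrt (hS hτt.le))
              (Finset.sum_le_sum_of_subset_of_nonneg
                (Finset.Icc_subset_Icc_right (by omega)) (fun i _ _ => hα i))
    set A := ∑ σ ∈ Finset.Icc 1 (t - 1), α σ with hA
    have hAnn : 0 ≤ A := Finset.sum_nonneg fun i _ => hα i
    have h1 : ∑ τ ∈ Finset.Icc 1 (t - 1), α τ * u τ ≤ A * (Real.sqrt (S t) + A) := by
      rw [hA, Finset.sum_mul]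
      exact Finset.sum_le_sum fun τ hτ =>
        mul_le_mul_of_nonneg_left (key τ hτ) (hα τ)
    have hst : Real.sqrt (S t) ^ 2 = S t := Real.sq_sqrt (hS0' t)
    have hsq : u t ^ 2 ≤ (Real.sqrt (S t) + A) ^ 2 := by
      have h2 := hrec t
      nlinarith [Real.sqrt_nonneg (S t)]
    have h3 := Real.sqrt_le_sqrt hsq
    rwa [Real.sqrt_sq (hu t), Real.sqrt_sq (by positivity)] at h3
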